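/- Let p : ℝ → ℝ be a continuously differentiable, strictly positive probability density with ∫_ℝ x p(x) dx = 0, ∫_ℝ x² p(x) dx = 1, x·p(x) → 0 as x → ±∞, and J := ∫_ℝ (p'(x))²/p(x) dx < ∞. Let φ(x) = e^{−x²/2}/√(2π) denote the standard Gaussian density. Then the relative entropy satisfies ∫_ℝ p(x) log(p(x)/φ(x)) dx ≤ (1/2)(J − 1). -/

import Mathlib

open MeasureTheory Filter Real Set


noncomputable def lsiGphi (x : ℝ) : ℝ := Real.exp (-x^2/2) / Real.sqrt (2*Real.pi)

lemma lsiGphi_pos (x : ℝ) : 0 < lsiGphi x := by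
  unfold lsiGphi
  positivity

lemma lsiGphi_cont : Continuous lsiGphi := by
  unfold lsiGphi
  fun_prop

lemma lsiGphi_eq (x : ℝ) : lsiGphi x = Real.exp (-(1/2) * x^2) / Real.sqrt (2*Real.pi) := by
  unfold lsiGphi; ring_nf

lemma lsiGphi_integrable : Integrable lsiGphi := by
  have h := (integrable_exp_neg_mul_sq (b := 1/2) (by norm_num)).div_const (Real.sqrt (2*Real.pi))
  apply h.congr
  filter_upwards with x
  rw [lsiGphi_eq]

lemma lsiGphi_integral : ∫ x, lsiGphi x = 1 := by
  have h : (∫ x, lsiGphi x) = (∫ x, Real.exp (-(1/2) * x^2)) / Real.sqrt (2*Real.pi) := by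
    rw [← integral_div]
    congr 1; ext x; rw [lsiGphi_eq]
  rw [h, integral_gaussian]
  rw [div_eq_one_iff_eq (by positivity)]
  rw [show π / (1/2 : ℝ) = 2 * π by ring]

lemma lsiGphi_hasDeriv (x : ℝ) : HasDerivAt lsiGphi (-x * lsiGphi x) x := by
  unfold lsiGphi
  have h1 : HasDerivAt (fun x : ℝ => -x^2/2) (-x) x := by
    have := ((hasDerivAt_pow 2 x).neg).div_const 2
    simpa using this.congr_deriv (by ring)
  have h2 := (h1.exp).div_const (Real.sqrt (2*Real.pi))
  exact h2.congr_deriv (by ring)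

lemma lsiGphi_tendsto_top : Tendsto lsiGphi atTop (nhds 0) := by
  rw [show (0:ℝ) = 0 / Real.sqrt (2*Real.pi) by simp]
  apply Tendsto.div_const
  apply Real.tendsto_exp_atBot.comp
  have h : Tendsto (fun x:ℝ => x^2/2) atTop atTop :=
    Tendsto.atTop_div_const (by norm_num) (tendsto_pow_atTop (by norm_num))
  exact (tendsto_neg_atTop_atBot.comp h).congr (fun x => by simp [Function.comp]; ring)

lemma lsiGphi_log (x : ℝ) : Real.log (lsiGphi x) = -x^2/2 - Real.log (Real.sqrt (2*Real.pi)) := by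
  unfold lsiGphi
  rw [Real.log_div (Real.exp_ne_zero _) (by positivity), Real.log_exp]


noncomputable def lsiCdf (q : ℝ → ℝ) (x : ℝ) : ℝ := ∫ t in Iic x, q t

section cdf
variable {q : ℝ → ℝ} (hq : Integrable q) (hc : Continuous q) (hpos : ∀ x, 0 < q x)
include hq

lemma lsiCdf_sub (a b : ℝ) : lsiCdf q b - lsiCdf q a = ∫ t in a..b, q t :=
  intervalIntegral.integral_Iic_sub_Iic hq.integrableOn hq.integrableOn

include hc in
lemma lsiCdf_hasDeriv (x : ℝ) : HasDerivAt (lsiCdf q) (q x) x := by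
  have key : ∀ y, lsiCdf q y = lsiCdf q 0 + ∫ t in (0:ℝ)..y, q t := fun y => by
    rw [← lsiCdf_sub hq]; ring
  have h := intervalIntegral.integral_hasDerivAt_right (a := 0) (b := x)
    (hq.intervalIntegrable) (hc.stronglyMeasurableAtFilter _ _) hc.continuousAt
  have h2 := h.const_add (lsiCdf q 0)
  exact h2.congr_of_eventuallyEq (Eventually.of_forall key)

include hc hpos in
lemma lsiCdf_strictMono : StrictMono (lsiCdf q) := by
  intro a b hab
  have h : 0 < ∫ t in a..b, q t :=
    intervalIntegral.intervalIntegral_pos_of_pos hq.intervalIntegrable hpos hab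
  have := lsiCdf_sub hq a b
  linarith

lemma lsiCdf_tendsto_top : Tendsto (lsiCdf q) atTop (nhds (∫ x, q x)) := by
  have h : Tendsto (fun y => lsiCdf q 0 + ∫ t in (0:ℝ)..y, q t) atTop
      (nhds (lsiCdf q 0 + ∫ t in Ioi (0:ℝ), q t)) := by
    exact (MeasureTheory.intervalIntegral_tendsto_integral_Ioi 0 hq.integrableOn tendsto_id).const_add _
  have he : (fun y => lsiCdf q 0 + ∫ t in (0:ℝ)..y, q t) = lsiCdf q := by
    funext y; rw [← lsiCdf_sub hq]; ring
  rw [he] at h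
  have : lsiCdf q 0 + (∫ t in Ioi (0:ℝ), q t) = ∫ x, q x := by
    rw [← intervalIntegral.integral_Iic_add_Ioi (b := (0:ℝ)) hq.integrableOn hq.integrableOn]
    rfl
  rwa [this] at h

lemma lsiCdf_tendsto_bot : Tendsto (lsiCdf q) atBot (nhds 0) := by
  have h : Tendsto (fun y => lsiCdf q 0 - ∫ t in y..(0:ℝ), q t) atBot
      (nhds (lsiCdf q 0 - ∫ t in Iic (0:ℝ), q t)) := by
    exact (MeasureTheory.intervalIntegral_tendsto_integral_Iic 0 hq.integrableOn tendsto_id).const_sub _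
  have he : (fun y => lsiCdf q 0 - ∫ t in y..(0:ℝ), q t) = lsiCdf q := by
    funext y; rw [← lsiCdf_sub hq]; ring
  rw [he] at h
  have : lsiCdf q 0 - (∫ t in Iic (0:ℝ), q t) = 0 := by unfold lsiCdf; ring
  rwa [this] at h

include hc hpos in
lemma lsiCdf_pos (x : ℝ) : 0 < lsiCdf q x := by
  have h1 : lsiCdf q (x-1) < lsiCdf q x := lsiCdf_strictMono hq hc hpos (by linarith)
  have h2 : 0 ≤ lsiCdf q (x-1) :=
    setIntegral_nonneg measurableSet_Iic (fun t _ => (hpos t).le)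
  linarith

include hc hpos in
lemma lsiCdf_lt (x : ℝ) : lsiCdf q x < ∫ x, q x := by
  have h1 : lsiCdf q x < lsiCdf q (x+1) := lsiCdf_strictMono hq hc hpos (by linarith)
  have h2 : lsiCdf q (x+1) ≤ ∫ x, q x := by
    have h3 := intervalIntegral.integral_Iic_add_Ioi (b := x+1) (f := q) (μ := volume)
      hq.integrableOn hq.integrableOn
    have h4 : 0 ≤ ∫ t in Ioi (x+1), q t :=
      setIntegral_nonneg measurableSet_Ioi (fun t _ => (hpos t).le)
    unfold lsiCdf
    linarith
  linarith

include hc hpos in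
lemma lsiCdf_surj {y : ℝ} (h0 : 0 < y) (h1 : y < ∫ x, q x) : ∃ x, lsiCdf q x = y := by
  obtain ⟨a, ha⟩ := ((lsiCdf_tendsto_bot hq).eventually (eventually_lt_nhds h0)).exists
  obtain ⟨b, hb⟩ := ((lsiCdf_tendsto_top hq).eventually (eventually_gt_nhds h1)).exists
  have hab : a ≤ b := by
    by_contra hh
    exact absurd (lsiCdf_strictMono hq hc hpos (lt_of_not_ge hh)) (by linarith)
  have hcont : ContinuousOn (lsiCdf q) (Icc a b) :=
    (fun x _ => ((lsiCdf_hasDeriv hq hc x).continuousAt).continuousWithinAt)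
  have := intermediate_value_Icc hab hcont (by constructor <;> linarith : y ∈ Icc (lsiCdf q a) (lsiCdf q b))
  obtain ⟨x, _, hx⟩ := this
  exact ⟨x, hx⟩

include hc hpos in
omit hc hpos in
lemma lsiCdf_one_sub (h1 : ∫ x, q x = 1) (x : ℝ) :
    1 - lsiCdf q x = ∫ t in Ioi x, q t := by
  rw [← h1, ← intervalIntegral.integral_Iic_add_Ioi (b := x) hq.integrableOn hq.integrableOn]
  unfold lsiCdf; ring

end cdf


noncomputable def lsiPhi : ℝ → ℝ := lsiCdf lsiGphi

lemma lsiPhi_mem (x : ℝ) : lsiPhi x ∈ Ioo (0:ℝ) 1 := by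
  constructor
  · exact lsiCdf_pos lsiGphi_integrable lsiGphi_cont lsiGphi_pos x
  · have := lsiCdf_lt lsiGphi_integrable lsiGphi_cont lsiGphi_pos x
    rwa [lsiGphi_integral] at this

lemma lsiPhi_strictMono : StrictMono lsiPhi :=
  lsiCdf_strictMono lsiGphi_integrable lsiGphi_cont lsiGphi_pos

lemma lsiPhi_surj {y : ℝ} (hy : y ∈ Ioo (0:ℝ) 1) : ∃ s, lsiPhi s = y :=
  lsiCdf_surj lsiGphi_integrable lsiGphi_cont lsiGphi_pos hy.1 (lsiGphi_integral ▸ hy.2)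

noncomputable def lsiPhiInv : ℝ → ℝ := Function.invFun lsiPhi

lemma lsiPhiInv_spec {y : ℝ} (hy : y ∈ Ioo (0:ℝ) 1) : lsiPhi (lsiPhiInv y) = y :=
  Function.invFun_eq (lsiPhi_surj hy)

lemma lsiPhiInv_phi (s : ℝ) : lsiPhiInv (lsiPhi s) = s :=
  Function.leftInverse_invFun lsiPhi_strictMono.injective s

lemma lsiPhiInv_monoOn : MonotoneOn lsiPhiInv (Ioo (0:ℝ) 1) := by
  intro y hy y' hy' hle
  by_contra h
  have h2 := lsiPhi_strictMono (lt_of_not_ge h)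
  rw [lsiPhiInv_spec hy, lsiPhiInv_spec hy'] at h2
  linarith

lemma lsiPhiInv_image : lsiPhiInv '' (Ioo (0:ℝ) 1) = univ := by
  apply eq_univ_of_forall
  intro s
  exact ⟨lsiPhi s, lsiPhi_mem s, lsiPhiInv_phi s⟩

lemma lsiPhiInv_contAt {y : ℝ} (hy : y ∈ Ioo (0:ℝ) 1) : ContinuousAt lsiPhiInv y := by
  apply continuousAt_of_monotoneOn_of_image_mem_nhds lsiPhiInv_monoOn
    (isOpen_Ioo.mem_nhds hy)
  rw [lsiPhiInv_image]
  exact univ_mem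

lemma lsiPhiInv_hasDeriv {y : ℝ} (hy : y ∈ Ioo (0:ℝ) 1) :
    HasDerivAt lsiPhiInv (lsiGphi (lsiPhiInv y))⁻¹ y := by
  apply HasDerivAt.of_local_left_inverse (lsiPhiInv_contAt hy)
    (lsiCdf_hasDeriv lsiGphi_integrable lsiGphi_cont (lsiPhiInv y))
    (ne_of_gt (lsiGphi_pos _))
  filter_upwards [isOpen_Ioo.mem_nhds hy] with z hz
  exact lsiPhiInv_spec hz

-- Gaussian tail bounds
lemma lsiGphi_x_integrable : Integrable (fun t => t * lsiGphi t) := by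
  have h2 := integrable_mul_exp_neg_mul_sq (b := 1/2) (by norm_num)
  have h3 := h2.div_const (Real.sqrt (2*Real.pi))
  apply h3.congr
  filter_upwards with x
  unfold lsiGphi
  rw [mul_div_assoc]
  ring_nf
lemma lsiGphi_ioi_integral (s : ℝ) : ∫ t in Ioi s, t * lsiGphi t = lsiGphi s := by
  have h := MeasureTheory.integral_Ioi_of_hasDerivAt_of_tendsto
    (f := fun t => -lsiGphi t) (f' := fun t => t * lsiGphi t) (a := s) (m := 0)
    ((lsiGphi_cont.neg.continuousAt).continuousWithinAt)
    (fun x _ => (lsiGphi_hasDeriv x).neg.congr_deriv (by ring))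
    ?_ (by simpa using lsiGphi_tendsto_top.neg)
  · simpa using h
  · exact lsiGphi_x_integrable.integrableOn

lemma lsiGphi_tail_top {s : ℝ} (hs : 0 < s) : ∫ t in Ioi s, lsiGphi t ≤ lsiGphi s / s := by
  have h1 : ∫ t in Ioi s, lsiGphi t ≤ ∫ t in Ioi s, (t/s) * lsiGphi t := by
    apply setIntegral_mono_on lsiGphi_integrable.integrableOn
    · exact (lsiGphi_x_integrable.integrableOn.div_const s).congr
        (Eventually.of_forall (fun t => by ring))
    · exact measurableSet_Ioi
    · intro t ht
      have ht' : s < t := ht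
      nth_rewrite 1 [← one_mul (lsiGphi t)]
      apply mul_le_mul_of_nonneg_right _ (lsiGphi_pos t).le
      rw [le_div_iff₀ hs]
      linarith
  calc ∫ t in Ioi s, lsiGphi t ≤ ∫ t in Ioi s, (t/s) * lsiGphi t := h1
    _ = (∫ t in Ioi s, t * lsiGphi t) / s := by
        rw [← integral_div]
        congr 1; ext t; ring
    _ = lsiGphi s / s := by rw [lsiGphi_ioi_integral]


lemma lsiGphi_tendsto_bot : Tendsto lsiGphi atBot (nhds 0) := by
  unfold lsiGphi
  rw [show (0:ℝ) = 0 / Real.sqrt (2*Real.pi) by simp]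
  apply Tendsto.div_const
  apply Real.tendsto_exp_atBot.comp
  have h : Tendsto (fun x:ℝ => x^2/2) atBot atTop := by
    apply Tendsto.atTop_div_const (by norm_num)
    have habs : Tendsto (fun x:ℝ => |x|) atBot atTop := tendsto_abs_atBot_atTop
    have hsq := (tendsto_pow_atTop (n:=2) (by norm_num)).comp habs
    exact hsq.congr (fun x => sq_abs x)
  exact (tendsto_neg_atTop_atBot.comp h).congr (fun x => by simp [Function.comp]; ring)

lemma lsiGphi_iic_integral (s : ℝ) : ∫ t in Iic s, t * lsiGphi t = -lsiGphi s := by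
  have h := MeasureTheory.integral_Iic_of_hasDerivAt_of_tendsto
    (f := fun t => -lsiGphi t) (f' := fun t => t * lsiGphi t) (a := s) (m := 0)
    ((lsiGphi_cont.neg.continuousAt).continuousWithinAt)
    (fun x _ => (lsiGphi_hasDeriv x).neg.congr_deriv (by ring))
    lsiGphi_x_integrable.integrableOn
    (by simpa using lsiGphi_tendsto_bot.neg)
  simpa using h

lemma lsiGphi_tail_bot {s : ℝ} (hs : s < 0) : ∫ t in Iic s, lsiGphi t ≤ lsiGphi s / (-s) := by
  have h1 : ∫ t in Iic s, lsiGphi t ≤ ∫ t in Iic s, (t/s) * lsiGphi t := by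
    apply setIntegral_mono_on lsiGphi_integrable.integrableOn
    · exact (lsiGphi_x_integrable.integrableOn.div_const s).congr
        (Eventually.of_forall (fun t => by ring))
    · exact measurableSet_Iic
    · intro t ht
      have ht' : t ≤ s := ht
      nth_rewrite 1 [← one_mul (lsiGphi t)]
      apply mul_le_mul_of_nonneg_right _ (lsiGphi_pos t).le
      rw [le_div_iff_of_neg hs]
      linarith
  calc ∫ t in Iic s, lsiGphi t ≤ ∫ t in Iic s, (t/s) * lsiGphi t := h1
    _ = (∫ t in Iic s, t * lsiGphi t) / s := by
        rw [← integral_div]; congr 1; ext t; ring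
    _ = lsiGphi s / (-s) := by rw [lsiGphi_iic_integral]; simp [div_neg, neg_div]


lemma lsiQuad {c A B : ℝ} (hc : 0 ≤ c) (hA : 0 ≤ A) (hB : 0 ≤ B)
    (h : ∀ t : ℝ, 0 < t → c ≤ A/(2*t) + t*B/2) : c^2 ≤ A*B := by
  rcases eq_or_lt_of_le hA with hA0 | hA0
  · have hc0 : c ≤ 0 := by
      apply le_of_forall_pos_le_add
      intro ε hε
      rcases eq_or_lt_of_le hB with hB0 | hB0
      · have := h 1 one_pos
        rw [← hA0, ← hB0] at this
        norm_num at this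
        linarith
      · have := h (2*ε/B) (by positivity)
        rw [← hA0] at this
        have heq : (0:ℝ)/(2*(2*ε/B)) + (2*ε/B)*B/2 = ε := by field_simp; ring
        linarith [heq ▸ this]
    have : c = 0 := le_antisymm hc0 hc
    rw [this]
    nlinarith
  · rcases eq_or_lt_of_le hB with hB0 | hB0
    · have hc0 : c ≤ 0 := by
        apply le_of_forall_pos_le_add
        intro ε hε
        have := h (A/(2*ε)) (by positivity)
        rw [← hB0] at this
        have heq : A/(2*(A/(2*ε))) + (A/(2*ε))*0/2 = ε := by
          field_simp
          ring
        linarith [heq ▸ this]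
      have : c = 0 := le_antisymm hc0 hc
      rw [this]
      nlinarith
    · set u := Real.sqrt A with hu
      set v := Real.sqrt B with hv
      have hu0 : 0 < u := Real.sqrt_pos.mpr hA0
      have hv0 : 0 < v := Real.sqrt_pos.mpr hB0
      have hu2 : u^2 = A := Real.sq_sqrt hA
      have hv2 : v^2 = B := Real.sq_sqrt hB
      have ht := h (u/v) (by positivity)
      have heq : A/(2*(u/v)) + (u/v)*B/2 = u*v := by
        rw [← hu2, ← hv2]
        field_simp
        ring
      rw [heq] at ht
      calc c^2 ≤ (u*v)^2 := by nlinarith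
        _ = A*B := by rw [mul_pow, hu2, hv2]

lemma lsiGphi_neg (x : ℝ) : lsiGphi (-x) = lsiGphi x := by
  unfold lsiGphi; rw [neg_pow]; norm_num

lemma lsiGphi_mul_top : Tendsto (fun s => s * lsiGphi s) atTop (nhds 0) := by
  apply squeeze_zero' (g := fun s => 2/(s * Real.sqrt (2*Real.pi)))
  · filter_upwards [eventually_gt_atTop 0] with s hs
    exact mul_nonneg hs.le (lsiGphi_pos s).le
  · filter_upwards [eventually_gt_atTop 0] with s hs
    unfold lsiGphi
    rw [mul_div_assoc', div_le_div_iff₀ (by positivity) (by positivity)]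
    have h1 : s^2/2 ≤ Real.exp (s^2/2) := by
      have := Real.add_one_le_exp (s^2/2)
      linarith
    have h2 : Real.exp (-s^2/2) * (s^2/2) ≤ 1 := by
      have h3 := mul_le_mul_of_nonneg_left h1 (Real.exp_pos (-s^2/2)).le
      rwa [← Real.exp_add, show -s^2/2 + s^2/2 = 0 by ring, Real.exp_zero] at h3
    nlinarith [Real.sqrt_nonneg (2*Real.pi), Real.exp_pos (-s^2/2)]
  · have h : Tendsto (fun s : ℝ => s * Real.sqrt (2*Real.pi)) atTop atTop :=
      Tendsto.atTop_mul_const (by positivity) tendsto_id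
    exact Tendsto.div_atTop tendsto_const_nhds h

lemma lsiGphi_mul_bot : Tendsto (fun s => (-s) * lsiGphi s) atBot (nhds 0) := by
  have h := lsiGphi_mul_top.comp tendsto_neg_atBot_atTop
  apply h.congr
  intro s
  simp only [Function.comp]
  rw [lsiGphi_neg]

set_option maxHeartbeats 1000000 in
/-- Log-Sobolev-type bound: for a centered, unit-variance, continuously differentiable and
strictly positive probability density `p` with vanishing tails and finite Fisher
information `J`, the relative entropy with respect to the standard Gaussian satisfies
`D(p‖φ) ≤ (J - 1)/2`. -/
theorem relative_entropy_le_half_relative_fisher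
    (p : ℝ → ℝ) (hp : ContDiff ℝ 1 p) (hpos : ∀ x, 0 < p x)
    (hp1 : ∫ x, p x = 1) (hmean : ∫ x, x * p x = 0) (hvar : ∫ x, x ^ 2 * p x = 1)
    (htail_top : Tendsto (fun x => x * p x) atTop (nhds 0))
    (htail_bot : Tendsto (fun x => x * p x) atBot (nhds 0))
    (hJ : Integrable (fun x => (deriv p x) ^ 2 / p x)) :
    ∫ x, p x * Real.log (p x / (Real.exp (-x ^ 2 / 2) / Real.sqrt (2 * π)))
      ≤ (1 / 2) * ((∫ x, (deriv p x) ^ 2 / p x) - 1) := by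
  have hpne : ∀ x, p x ≠ 0 := fun x => ne_of_gt (hpos x)
  have hpc : Continuous p := hp.continuous
  have hp'c : Continuous (deriv p) := hp.continuous_deriv le_rfl
  have hpd : ∀ x, HasDerivAt p (deriv p x) x :=
    fun x => ((hp.differentiable one_ne_zero) x).hasDerivAt
  have hpI : Integrable p := by
    by_contra h
    rw [MeasureTheory.integral_undef h] at hp1
    norm_num at hp1
  have hx2pI : Integrable (fun x => x^2 * p x) := by
    by_contra h
    rw [MeasureTheory.integral_undef h] at hvar
    norm_num at hvar
  set J := ∫ x, (deriv p x)^2 / p x with hJdef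
  have hfish_nn : ∀ x, 0 ≤ (deriv p x)^2 / p x := fun x => div_nonneg (sq_nonneg _) (hpos x).le
  have hfishc : Continuous (fun x => (deriv p x)^2 / p x) :=
    (hp'c.pow 2).div hpc hpne
  -- integrability of x * p'
  have hcxp' : Continuous (fun x => x * deriv p x) := by fun_prop
  have hxp'I : Integrable (fun x => x * deriv p x) := by
    apply Integrable.mono' ((hx2pI.add hJ).div_const 2) hcxp'.aestronglyMeasurable
    filter_upwards with x
    have h0 := hpos x
    rw [Real.norm_eq_abs, abs_mul]
    have key : (|x| * |deriv p x| * 2) * p x ≤ ((x^2 * p x + (deriv p x)^2 / p x)) * p x := by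
      have hd : (deriv p x)^2 / p x * p x = (deriv p x)^2 := div_mul_cancel₀ _ (hpne x)
      have hr : (x^2 * p x + (deriv p x)^2 / p x) * p x = x^2 * p x^2 + (deriv p x)^2 := by
        rw [add_mul, hd]; ring
      rw [hr]
      nlinarith [sq_nonneg (|x| * p x - |deriv p x|), sq_abs x, sq_abs (deriv p x),
        abs_nonneg x, abs_nonneg (deriv p x), sq_nonneg (p x), sq_nonneg x,
        mul_nonneg (mul_nonneg (abs_nonneg x) h0.le) (abs_nonneg (deriv p x))]
    have h2 := (mul_le_mul_iff_of_pos_right h0).mp key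
    simp only [Pi.add_apply]
    linarith
  -- ∫ x p' = -1
  have hxp'val : ∫ x, x * deriv p x = -1 := by
    have hFTC : ∀ R : ℝ, ∫ x in (-R)..R, (p x + x * deriv p x)
        = R * p R - (-R) * p (-R) := by
      intro R
      exact intervalIntegral.integral_eq_sub_of_hasDerivAt (f := fun x => x * p x)
        (fun x _ => ((hasDerivAt_id' x).mul (hpd x)).congr_deriv (by ring))
        ((hpc.add hcxp').intervalIntegrable _ _)
    have hsplit : ∀ R : ℝ, ∫ x in (-R)..R, x * deriv p x
        = (R * p R - (-R) * p (-R)) - ∫ x in (-R)..R, p x := by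
      intro R
      rw [← hFTC R, ← intervalIntegral.integral_sub (f := fun x => p x + x * deriv p x)
        ((hpc.add hcxp').intervalIntegrable _ _)
        (hpc.intervalIntegrable _ _)]
      congr 1
      funext x
      ring
    have hT1 : Tendsto (fun R : ℝ => ∫ x in (-R)..R, x * deriv p x) atTop
        (nhds (∫ x, x * deriv p x)) :=
      MeasureTheory.intervalIntegral_tendsto_integral hxp'I tendsto_neg_atTop_atBot tendsto_id
    have hT2 : Tendsto (fun R : ℝ => (R * p R - (-R) * p (-R)) - ∫ x in (-R)..R, p x) atTop
        (nhds ((0 - 0) - 1)) := by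
      apply Tendsto.sub
      · exact (htail_top.sub (htail_bot.comp tendsto_neg_atTop_atBot))
      · have := MeasureTheory.intervalIntegral_tendsto_integral hpI tendsto_neg_atTop_atBot tendsto_id
        rwa [hp1] at this
    have := tendsto_nhds_unique hT1 ((hT2.congr (fun R => (hsplit R).symm)))
    rw [this]; norm_num
  -- the relative score integrand
  have hre : ∀ x, p x * (deriv p x / p x + x)^2
      = (deriv p x)^2 / p x + (2*(x * deriv p x) + x^2 * p x) := by
    intro x
    field_simp [hpne x]
    ring
  have hρI : Integrable (fun x => p x * (deriv p x / p x + x)^2) := by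
    rw [show (fun x => p x * (deriv p x / p x + x)^2)
      = (fun x => (deriv p x)^2 / p x + (2*(x * deriv p x) + x^2 * p x)) from funext hre]
    exact hJ.add ((hxp'I.const_mul 2).add hx2pI)
  have hρval : ∫ x, p x * (deriv p x / p x + x)^2 = J - 1 := by
    have i1 : Integrable (fun x => 2*(x * deriv p x)) := hxp'I.const_mul 2
    have i2 : Integrable (fun x => 2*(x * deriv p x) + x^2 * p x) := i1.add hx2pI
    rw [show (fun x => p x * (deriv p x / p x + x)^2)
      = (fun x => (deriv p x)^2 / p x + (2*(x * deriv p x) + x^2 * p x)) from funext hre]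
    rw [MeasureTheory.integral_add hJ i2, MeasureTheory.integral_add i1 hx2pI,
      MeasureTheory.integral_const_mul, hxp'val, hvar]
    ring
  have hJ1 : 0 ≤ J - 1 := by
    rw [← hρval]
    exact integral_nonneg (fun x => mul_nonneg (hpos x).le (sq_nonneg _))
  by_cases hLI : Integrable (fun x => p x * Real.log (p x / (Real.exp (-x ^ 2 / 2) / Real.sqrt (2 * π))))
  case neg =>
    rw [MeasureTheory.integral_undef hLI]
    linarith
  -- Part 2: the transport map
  have hJnn : 0 ≤ J := by rw [hJdef]; exact integral_nonneg hfish_nn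
  set F := lsiCdf p with hFdef
  have hFd : ∀ x, HasDerivAt F (p x) x := lsiCdf_hasDeriv hpI hpc
  have hFmem : ∀ x, F x ∈ Ioo (0:ℝ) 1 := fun x =>
    ⟨lsiCdf_pos hpI hpc hpos x, by have := lsiCdf_lt hpI hpc hpos x; rwa [hp1] at this⟩
  set S := fun x => lsiPhiInv (F x) with hSdef
  have hPhiS : ∀ x, lsiPhi (S x) = F x := fun x => lsiPhiInv_spec (hFmem x)
  have hSd : ∀ x, HasDerivAt S (p x / lsiGphi (S x)) x := by
    intro x
    have h := (lsiPhiInv_hasDeriv (hFmem x)).comp x (hFd x)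
    rw [div_eq_inv_mul]; exact h
  have hSc : Continuous S := continuous_iff_continuousAt.mpr fun x => (hSd x).continuousAt
  have hSmono : StrictMono S := by
    intro a b hab
    have h2 : lsiPhi (S a) < lsiPhi (S b) := by
      rw [hPhiS a, hPhiS b]
      exact lsiCdf_strictMono hpI hpc hpos hab
    by_contra h
    exact absurd h2 (not_lt.mpr (lsiPhi_strictMono.monotone (not_lt.mp h)))
  have hSsurj : ∀ s, ∃ x, S x = s := by
    intro s
    obtain ⟨x, hx⟩ := lsiCdf_surj hpI hpc hpos (lsiPhi_mem s).1
      (by rw [hp1]; exact (lsiPhi_mem s).2)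
    refine ⟨x, ?_⟩
    rw [← hFdef] at hx
    show lsiPhiInv (F x) = s
    rw [hx, lsiPhiInv_phi]
  have hStop : Tendsto S atTop atTop := by
    rw [tendsto_atTop_atTop]
    intro b
    obtain ⟨x, hx⟩ := hSsurj b
    exact ⟨x, fun a ha => hx ▸ hSmono.monotone ha⟩
  have hSbot : Tendsto S atBot atBot := by
    rw [tendsto_atBot_atBot]
    intro b
    obtain ⟨x, hx⟩ := hSsurj b
    exact ⟨x, fun a ha => hx ▸ hSmono.monotone ha⟩
  -- p tends to 0 at both ends
  have hp0top : Tendsto p atTop (nhds 0) := by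
    apply squeeze_zero' (g := fun x => x * p x)
    · filter_upwards with x using (hpos x).le
    · filter_upwards [eventually_ge_atTop 1] with x hx
      nlinarith [hpos x]
    · exact htail_top
  have hp0bot : Tendsto p atBot (nhds 0) := by
    apply squeeze_zero' (g := fun x => -(x * p x))
    · filter_upwards with x using (hpos x).le
    · filter_upwards [eventually_le_atBot (-1)] with x hx
      nlinarith [hpos x]
    · simpa using htail_bot.neg
  -- Cauchy-Schwarz style increment bound
  have hAM : ∀ t : ℝ, 0 < t → ∀ x, |deriv p x| ≤ (deriv p x)^2 / p x / (2*t) + t * p x / 2 := by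
    intro t ht x
    have h0 := hpos x
    have key : |deriv p x| * (2*t*p x) ≤ (deriv p x)^2 + t^2 * p x^2 := by
      nlinarith [sq_nonneg (|deriv p x| - t * p x), sq_abs (deriv p x), abs_nonneg (deriv p x)]
    have h2 : |deriv p x| ≤ ((deriv p x)^2 + t^2*p x^2) / (2*t*p x) := by
      rw [le_div_iff₀ (by positivity)]
      linarith
    calc |deriv p x| ≤ ((deriv p x)^2 + t^2*p x^2) / (2*t*p x) := h2
      _ = (deriv p x)^2/p x/(2*t) + t * p x/2 := by field_simp
  have hkey : ∀ t : ℝ, 0 < t → ∀ a b : ℝ, a ≤ b →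
      |p b - p a| ≤ J/(2*t) + t*(F b - F a)/2 := by
    intro t ht a b hab
    have h1 : p b - p a = ∫ x in a..b, deriv p x :=
      (intervalIntegral.integral_eq_sub_of_hasDerivAt (fun x _ => hpd x)
        (hp'c.intervalIntegrable _ _)).symm
    rw [h1]
    have h2 : |∫ x in a..b, deriv p x| ≤ ∫ x in a..b, |deriv p x| :=
      intervalIntegral.abs_integral_le_integral_abs hab
    have h3 : ∫ x in a..b, |deriv p x| ≤ ∫ x in a..b, ((deriv p x)^2/p x/(2*t) + t * p x/2) := by
      apply intervalIntegral.integral_mono_on hab (hp'c.abs.intervalIntegrable _ _)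
        (((hfishc.div_const _).add ((continuous_const.mul hpc).div_const 2)).intervalIntegrable _ _)
      intro x _
      exact hAM t ht x
    have h4 : ∫ x in a..b, ((deriv p x)^2/p x/(2*t) + t * p x/2)
        = (∫ x in a..b, (deriv p x)^2/p x)/(2*t) + t * (F b - F a)/2 := by
      rw [intervalIntegral.integral_add (g := fun x => t * p x / 2) ((hfishc.div_const _).intervalIntegrable _ _)
        (((continuous_const.mul hpc).div_const 2).intervalIntegrable _ _),
        intervalIntegral.integral_div, intervalIntegral.integral_div,
        intervalIntegral.integral_const_mul, ← lsiCdf_sub hpI a b, ← hFdef]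
    have h5 : (∫ x in a..b, (deriv p x)^2/p x) ≤ J := by
      rw [intervalIntegral.integral_of_le hab, hJdef]
      exact setIntegral_le_integral hJ (Eventually.of_forall hfish_nn)
    have h6 : (∫ x in a..b, (deriv p x)^2/p x)/(2*t) ≤ J/(2*t) := by
      gcongr
    linarith
  -- tail bounds on p^2
  have hub : ∀ x, (p x)^2 ≤ J * (1 - F x) := by
    intro x
    apply lsiQuad (hpos x).le hJnn (by linarith [(hFmem x).2])
    intro t ht
    have hev : ∀ᶠ b in atTop, p x ≤ p b + (J/(2*t) + t*(1 - F x)/2) := by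
      filter_upwards [eventually_ge_atTop x] with b hb
      have h1 := hkey t ht x b hb
      have h2 : p x - p b ≤ |p b - p x| := by
        rw [abs_sub_comm]
        exact le_abs_self _
      have h3 : t*(F b - F x) ≤ t*(1 - F x) :=
        mul_le_mul_of_nonneg_left (by linarith [(hFmem b).2]) ht.le
      linarith
    have hlim : Tendsto (fun b => p b + (J/(2*t) + t*(1-F x)/2)) atTop
        (nhds (0 + (J/(2*t) + t*(1-F x)/2))) := hp0top.add tendsto_const_nhds
    have := ge_of_tendsto hlim hev
    linarith
  have hlb : ∀ x, (p x)^2 ≤ J * F x := by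
    intro x
    apply lsiQuad (hpos x).le hJnn (hFmem x).1.le
    intro t ht
    have hev : ∀ᶠ a in atBot, p x ≤ p a + (J/(2*t) + t*(F x)/2) := by
      filter_upwards [eventually_le_atBot x] with a ha
      have h1 := hkey t ht a x ha
      have h2 : p x - p a ≤ |p x - p a| := le_abs_self _
      have h3 : t*(F x - F a) ≤ t*(F x) :=
        mul_le_mul_of_nonneg_left (by linarith [(hFmem a).1]) ht.le
      linarith
    have hlim : Tendsto (fun a => p a + (J/(2*t) + t*(F x)/2)) atBot
        (nhds (0 + (J/(2*t) + t*(F x)/2))) := hp0bot.add tendsto_const_nhds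
    have := ge_of_tendsto hlim hev
    linarith
  -- p * S tends to zero at both ends
  have hpStop : Tendsto (fun x => p x * S x) atTop (nhds 0) := by
    apply squeeze_zero' (g := fun x => Real.sqrt (J * (S x * lsiGphi (S x))))
    · filter_upwards [hStop.eventually_ge_atTop 0] with x hx
      exact mul_nonneg (hpos x).le hx
    · filter_upwards [hStop.eventually_ge_atTop 1] with x hSx
      have hS1 : (0:ℝ) < S x := lt_of_lt_of_le one_pos hSx
      have ht : 1 - F x ≤ lsiGphi (S x) / S x := by
        have h2 : 1 - F x = ∫ t in Ioi (S x), lsiGphi t := by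
          rw [← hPhiS x]
          exact lsiCdf_one_sub lsiGphi_integrable lsiGphi_integral (S x)
        rw [h2]
        exact lsiGphi_tail_top hS1
      have hsq : (p x * S x)^2 ≤ J * (S x * lsiGphi (S x)) := by
        have h1 : (p x)^2 ≤ J * (1 - F x) := hub x
        have h5 : J * (1 - F x) ≤ J * (lsiGphi (S x)/S x) := mul_le_mul_of_nonneg_left ht hJnn
        have h3 : (p x)^2 * S x^2 ≤ J * (lsiGphi (S x)/S x) * S x^2 := by
          nlinarith [sq_nonneg (S x)]
        calc (p x * S x)^2 = (p x)^2 * S x^2 := by ring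
          _ ≤ J * (lsiGphi (S x)/S x) * S x^2 := h3
          _ = J * (S x * lsiGphi (S x)) := by
              field_simp
      have hnn : 0 ≤ p x * S x := mul_nonneg (hpos x).le hS1.le
      exact (Real.le_sqrt hnn (mul_nonneg hJnn (mul_nonneg hS1.le (lsiGphi_pos _).le))).mpr hsq
    · have h1 : Tendsto (fun s => J * (s * lsiGphi s)) atTop (nhds (J * 0)) :=
        lsiGphi_mul_top.const_mul J
      have h2 : Tendsto (fun x => J * (S x * lsiGphi (S x))) atTop (nhds 0) := by
        have := h1.comp hStop
        simpa [Function.comp_def] using this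
      have h3 := (Real.continuous_sqrt.tendsto 0).comp h2
      simpa [Function.comp_def] using h3
  have hpSbot : Tendsto (fun x => p x * S x) atBot (nhds 0) := by
    have hneg : Tendsto (fun x => p x * (-S x)) atBot (nhds 0) := by
      apply squeeze_zero' (g := fun x => Real.sqrt (J * ((-S x) * lsiGphi (S x))))
      · filter_upwards [hSbot.eventually_le_atBot 0] with x hx
        have : 0 ≤ -S x := by linarith
        exact mul_nonneg (hpos x).le this
      · filter_upwards [hSbot.eventually_le_atBot (-1)] with x hSx
        have hS1 : S x < 0 := lt_of_le_of_lt hSx (by norm_num)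
        have ht : F x ≤ lsiGphi (S x) / (-S x) := by
          have h2 : F x = ∫ t in Iic (S x), lsiGphi t := by
            rw [← hPhiS x]
            rfl
          rw [h2]
          exact lsiGphi_tail_bot hS1
        have hsq : (p x * (-S x))^2 ≤ J * ((-S x) * lsiGphi (S x)) := by
          have h1 : (p x)^2 ≤ J * F x := hlb x
          have h5 : J * F x ≤ J * (lsiGphi (S x)/(-S x)) := mul_le_mul_of_nonneg_left ht hJnn
          have h3 : (p x)^2 * S x^2 ≤ J * (lsiGphi (S x)/(-S x)) * S x^2 := by
            nlinarith [sq_nonneg (S x)]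
          calc (p x * (-S x))^2 = (p x)^2 * S x^2 := by ring
            _ ≤ J * (lsiGphi (S x)/(-S x)) * S x^2 := h3
            _ = J * ((-S x) * lsiGphi (S x)) := by
                rw [div_neg]
                field_simp [hS1.ne]
        have hnn : 0 ≤ p x * (-S x) := mul_nonneg (hpos x).le (by linarith)
        exact (Real.le_sqrt hnn (mul_nonneg hJnn (mul_nonneg (by linarith) (lsiGphi_pos _).le))).mpr hsq
      · have h1 : Tendsto (fun s => J * ((-s) * lsiGphi s)) atBot (nhds (J * 0)) :=
          lsiGphi_mul_bot.const_mul J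
        have h2 : Tendsto (fun x => J * ((-S x) * lsiGphi (S x))) atBot (nhds 0) := by
          have := h1.comp hSbot
          simpa [Function.comp_def] using this
        have h3 := (Real.continuous_sqrt.tendsto 0).comp h2
        simpa [Function.comp_def] using h3
    have := hneg.neg
    simp only [neg_zero] at this
    apply this.congr
    intro x
    ring
  -- Part 3: final assembly
  set S' := fun x => p x / lsiGphi (S x) with hS'def
  have hS'pos : ∀ x, 0 < S' x := fun x => div_pos (hpos x) (lsiGphi_pos _)
  have hS'c : Continuous S' := hpc.div (lsiGphi_cont.comp hSc) (fun x => (lsiGphi_pos _).ne')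
  have hid : ∀ x, p x * Real.log (p x / (Real.exp (-x ^ 2 / 2) / Real.sqrt (2 * π)))
      = p x * ((x^2/2 - S x^2/2) + Real.log (S' x)) := by
    intro x
    have hgx : Real.exp (-x^2/2) / Real.sqrt (2*π) = lsiGphi x := rfl
    rw [hgx]
    congr 1
    have hps : p x = lsiGphi (S x) * S' x := by
      have h9 : S' x = p x / lsiGphi (S x) := rfl
      rw [h9, mul_comm]
      exact (div_mul_cancel₀ _ ((lsiGphi_pos (S x)).ne')).symm
    rw [Real.log_div (hpne x) (lsiGphi_pos x).ne']
    nth_rewrite 1 [hps]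
    rw [Real.log_mul (lsiGphi_pos _).ne' (hS'pos x).ne', lsiGphi_log, lsiGphi_log]
    ring
  have hptw : ∀ x, p x * ((x^2/2 - S x^2/2) + Real.log (S' x))
      ≤ (deriv p x * (S x - x) + p x * (S' x - 1)) + p x * (deriv p x / p x + x)^2 / 2 := by
    intro x
    have h0 := hpos x
    have hlog : Real.log (S' x) ≤ S' x - 1 := Real.log_le_sub_one_of_pos (hS'pos x)
    have h1 : p x * ((x^2/2 - S x^2/2) + Real.log (S' x))
        ≤ p x * (x^2/2 - S x^2/2) + p x * (S' x - 1) := by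
      calc p x * ((x^2/2 - S x^2/2) + Real.log (S' x))
          = p x * (x^2/2 - S x^2/2) + p x * Real.log (S' x) := by ring
        _ ≤ p x * (x^2/2 - S x^2/2) + p x * (S' x - 1) :=
            add_le_add_right (mul_le_mul_of_nonneg_left hlog h0.le) _
    have h2 : p x * (x^2/2 - S x^2/2) - deriv p x * (S x - x)
        ≤ p x * (deriv p x / p x + x)^2 / 2 := by
      have h9 : p x * (deriv p x / p x + x) = deriv p x + x * p x := by
        rw [mul_add, mul_comm (p x) (deriv p x / p x), div_mul_cancel₀ _ (hpne x)]
        ring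
      have hexp : p x * (deriv p x / p x + x)^2 / 2 = (deriv p x + x * p x)^2/(2*p x) := by
        rw [eq_div_iff (by positivity : (2:ℝ)*p x ≠ 0)]
        calc p x * (deriv p x / p x + x)^2/2 * (2*p x)
            = (p x * (deriv p x / p x + x))^2 := by ring
          _ = (deriv p x + x * p x)^2 := by rw [h9]
      rw [hexp, le_div_iff₀ (by positivity)]
      nlinarith [sq_nonneg (p x * S x + deriv p x)]
    linarith
  have hWd : ∀ x, HasDerivAt (fun y => p y * (S y - y))
      (deriv p x * (S x - x) + p x * (S' x - 1)) x := by
    intro x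
    have h := (hpd x).mul ((hSd x).sub (hasDerivAt_id x))
    have he : deriv p x * (S x - x) + p x * (p x / lsiGphi (S x) - 1)
        = deriv p x * (S x - x) + p x * (S' x - 1) := by rw [hS'def]
    exact (he ▸ h : _)
  have hWc' : Continuous (fun x => deriv p x * (S x - x) + p x * (S' x - 1)) :=
    (hp'c.mul (hSc.sub continuous_id)).add (hpc.mul (hS'c.sub continuous_const))
  have hρc : Continuous (fun x => p x * (deriv p x / p x + x)^2) :=
    hpc.mul (((hp'c.div hpc hpne).add continuous_id).pow 2)
  have hρ2c : Continuous (fun x => p x * (deriv p x / p x + x)^2 / 2) := hρc.div_const 2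
  have hLHSc : Continuous (fun x => p x * Real.log (p x / (Real.exp (-x ^ 2 / 2) / Real.sqrt (2 * π)))) := by
    apply hpc.mul
    apply Continuous.log
    · apply hpc.div
      · fun_prop
      · intro x
        positivity
    · intro x
      have h1 : 0 < Real.exp (-x^2/2) / Real.sqrt (2*π) := by positivity
      exact (div_pos (hpos x) h1).ne'
  have hineq : ∀ᶠ R in atTop,
      (∫ x in (-R)..R, p x * Real.log (p x / (Real.exp (-x ^ 2 / 2) / Real.sqrt (2 * π))))
      ≤ (p R * (S R - R) - p (-R) * (S (-R) - (-R)))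
        + ∫ x in (-R)..R, p x * (deriv p x / p x + x)^2 / 2 := by
    filter_upwards [eventually_ge_atTop 0] with R hR
    have hRR : (-R) ≤ R := by linarith
    have step1 : (∫ x in (-R)..R, p x * Real.log (p x / (Real.exp (-x ^ 2 / 2) / Real.sqrt (2 * π))))
        ≤ ∫ x in (-R)..R, ((deriv p x * (S x - x) + p x * (S' x - 1))
            + p x * (deriv p x / p x + x)^2 / 2) := by
      apply intervalIntegral.integral_mono_on hRR (hLHSc.intervalIntegrable _ _)
        ((hWc'.add hρ2c).intervalIntegrable _ _)
      intro x _
      rw [hid x]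
      exact hptw x
    have step2 : (∫ x in (-R)..R, ((deriv p x * (S x - x) + p x * (S' x - 1))
            + p x * (deriv p x / p x + x)^2 / 2))
        = (p R * (S R - R) - p (-R) * (S (-R) - (-R)))
          + ∫ x in (-R)..R, p x * (deriv p x / p x + x)^2 / 2 := by
      rw [intervalIntegral.integral_add (hWc'.intervalIntegrable _ _) (hρ2c.intervalIntegrable _ _)]
      congr 1
      exact intervalIntegral.integral_eq_sub_of_hasDerivAt (fun x _ => hWd x)
        (hWc'.intervalIntegrable _ _)
    linarith
  have hρ2I : Integrable (fun x => p x * (deriv p x / p x + x)^2 / 2) := hρI.div_const 2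
  have hT1 : Tendsto (fun R => ∫ x in (-R)..R,
      p x * Real.log (p x / (Real.exp (-x ^ 2 / 2) / Real.sqrt (2 * π)))) atTop
      (nhds (∫ x, p x * Real.log (p x / (Real.exp (-x ^ 2 / 2) / Real.sqrt (2 * π))))) :=
    MeasureTheory.intervalIntegral_tendsto_integral hLI tendsto_neg_atTop_atBot tendsto_id
  have hWtop : Tendsto (fun R => p R * (S R - R)) atTop (nhds 0) := by
    have h := hpStop.sub htail_top
    rw [sub_self] at h
    apply h.congr
    intro R
    ring
  have hWbot : Tendsto (fun R => p (-R) * (S (-R) - (-R))) atTop (nhds 0) := by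
    have h := (hpSbot.sub htail_bot).comp tendsto_neg_atTop_atBot
    rw [sub_self] at h
    apply h.congr
    intro R
    simp only [Function.comp]
    ring
  have hT2 : Tendsto (fun R => (p R * (S R - R) - p (-R) * (S (-R) - (-R)))
      + ∫ x in (-R)..R, p x * (deriv p x / p x + x)^2 / 2) atTop
      (nhds ((0 - 0) + ∫ x, p x * (deriv p x / p x + x)^2 / 2)) :=
    (hWtop.sub hWbot).add
      (MeasureTheory.intervalIntegral_tendsto_integral hρ2I tendsto_neg_atTop_atBot tendsto_id)
  have hfinal := le_of_tendsto_of_tendsto hT1 hT2 hineq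
  have hval : ∫ x, p x * (deriv p x / p x + x)^2 / 2 = (J - 1)/2 := by
    rw [MeasureTheory.integral_div, hρval]
  rw [hval] at hfinal
  linarith
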